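/- Let G be a finite abelian group of order N, l ≥ 2 an integer, Λ ⊆ G dissociated, and S₁,…,S_l ⊆ G arbitrary sets. Then ∑_{x∈Λ} (S₁ * S₂ * … * S_l)²(x) ≤ C₃ (|S_l|/N) (∑_ξ ∏_{j=1}^{l-1} |Ŝ_j(ξ)|²) · log N for an absolute constant C₃ > 0. -/

import Mathlib

open Finset

private lemma addchar_map_sum {G M : Type*} [AddCommGroup G] [CommMonoid M]
    (ψ : AddChar G M) {ι : Type*} (s : Finset ι) (f : ι → G) :
    ψ (∑ i ∈ s, f i) = ∏ i ∈ s, ψ (f i) := by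
  classical
  induction s using Finset.cons_induction with
  | empty => simp
  | cons a s ha ih => rw [Finset.sum_cons, Finset.prod_cons, AddChar.map_add_eq_mul, ih]

/-- Pointwise bound: `r(x)^2 ≤ (|S k|/N) ∑_ξ ∏_{j ≠ k} |Ŝ_j(ξ)|²`. -/
private lemma pointwise_bound {G : Type} [AddCommGroup G] [Fintype G] [DecidableEq G]
    (e : AddChar G (AddChar G ℂ)) (he : Function.Injective e)
    {l : ℕ} (S : Fin l → Finset G) (k : Fin l) (x : G) :
    (((Finset.univ.filter
        (fun y : Fin l → G => (∀ j, y j ∈ S j) ∧ ∑ j, y j = x)).card : ℝ)) ^ 2 ≤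
      (((S k).card : ℝ) / Fintype.card G) *
        ∑ ξ : G, ∏ j ∈ Finset.univ.erase k,
          (‖∑ x ∈ S j, e (-ξ) x‖) ^ 2 := by
  set N := Fintype.card G with hN
  have hN0 : 0 < N := Fintype.card_pos
  have hNR : (0:ℝ) < (N:ℝ) := by exact_mod_cast hN0
  have hbij : Function.Bijective e :=
    (Fintype.bijective_iff_injective_and_card e).2 ⟨he, by rw [AddChar.card_eq]⟩
  have horth : ∀ x : G, ∑ ξ : G, e ξ x = if x = 0 then (N : ℂ) else 0 := by
    intro x
    rw [← AddChar.sum_apply_eq_ite x]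
    exact Fintype.sum_bijective e hbij _ _ fun ξ => rfl
  have horth' : ∀ x : G, ∑ ξ : G, e (-ξ) x = if x = 0 then (N : ℂ) else 0 := by
    intro x
    rw [← horth x]
    exact Fintype.sum_equiv (Equiv.neg G) _ _ fun ξ => rfl
  set r : G → ℕ := fun x =>
    (Finset.univ.filter
      (fun y : Fin l → G => (∀ j, y j ∈ S j) ∧ ∑ j, y j = x)).card with hr
  set Fh : Fin l → G → ℂ := fun j ξ => ∑ x ∈ S j, e (-ξ) x with hFh
  -- Fourier transform of r is the full product
  have hB : ∀ ξ : G, ∏ j : Fin l, Fh j ξ = ∑ x : G, (r x : ℂ) * e (-ξ) x := by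
    intro ξ
    rw [hFh]
    rw [Finset.prod_univ_sum]
    have h1 : ∀ y ∈ Fintype.piFinset S, ∏ j : Fin l, e (-ξ) (y j)
        = e (-ξ) (∑ j, y j) := fun y _ => (addchar_map_sum _ _ _).symm
    rw [Finset.sum_congr rfl h1]
    have h2 : ∀ x : G, (r x : ℂ) * e (-ξ) x
        = ∑ y ∈ (Fintype.piFinset S).filter (fun y => ∑ j, y j = x),
            e (-ξ) (∑ j, y j) := by
      intro x
      have hx : ∀ y ∈ (Fintype.piFinset S).filter (fun y => ∑ j, y j = x),
          e (-ξ) (∑ j, y j) = e (-ξ) x := by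
        intro y hy
        rw [(Finset.mem_filter.1 hy).2]
      rw [Finset.sum_congr rfl hx, Finset.sum_const, nsmul_eq_mul]
      have hset : Finset.univ.filter
          (fun y : Fin l → G => (∀ j, y j ∈ S j) ∧ ∑ j, y j = x)
          = (Fintype.piFinset S).filter (fun y => ∑ j, y j = x) := by
        ext y
        simp [Fintype.mem_piFinset]
      simp only [hr, hset]
    rw [Finset.sum_congr rfl fun x _ => h2 x]
    exact (Finset.sum_fiberwise _ _ _).symm
  -- Fourier inversion
  have hC : (r x : ℂ) * N = ∑ ξ : G, (∏ j : Fin l, Fh j ξ) * e ξ x := by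
    have key : ∀ ξ : G, (∏ j : Fin l, Fh j ξ) * e ξ x
        = ∑ x' : G, (r x' : ℂ) * e ξ (x - x') := by
      intro ξ
      rw [hB ξ, Finset.sum_mul]
      refine Finset.sum_congr rfl fun x' _ => ?_
      rw [mul_assoc]
      congr 1
      have h1 : e (-ξ) x' = e ξ (-x') := by
        rw [AddChar.map_neg_eq_inv, AddChar.inv_apply]
      rw [h1, ← AddChar.map_add_eq_mul]
      congr 1
      abel
    rw [Finset.sum_congr rfl fun ξ _ => key ξ, Finset.sum_comm]
    have h3 : ∀ x' : G, ∑ ξ : G, (r x' : ℂ) * e ξ (x - x')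
        = (r x' : ℂ) * if x' = x then (N:ℂ) else 0 := by
      intro x'
      rw [← Finset.mul_sum, horth (x - x')]
      congr 1
      simp [sub_eq_zero, eq_comm]
    rw [Finset.sum_congr rfl fun x' _ => h3 x']
    simp [Finset.sum_ite_eq', mul_comm]
  -- Parseval
  have hD : ∀ T : Finset G, ∑ ξ : G, (‖∑ x ∈ T, e (-ξ) x‖) ^ 2
      = (N : ℝ) * T.card := by
    intro T
    have key : ∑ ξ : G, (∑ a ∈ T, e (-ξ) a) * (starRingEnd ℂ) (∑ b ∈ T, e (-ξ) b)
        = (N : ℂ) * T.card := by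
      have h2 : ∀ ξ : G, (∑ a ∈ T, e (-ξ) a) * (starRingEnd ℂ) (∑ b ∈ T, e (-ξ) b)
          = ∑ a ∈ T, ∑ b ∈ T, e (-ξ) (a - b) := by
        intro ξ
        rw [map_sum, Finset.sum_mul_sum]
        refine Finset.sum_congr rfl fun a _ => Finset.sum_congr rfl fun b _ => ?_
        rw [← AddChar.map_neg_eq_conj, ← AddChar.map_add_eq_mul, sub_eq_add_neg]
      calc ∑ ξ : G, (∑ a ∈ T, e (-ξ) a) * (starRingEnd ℂ) (∑ b ∈ T, e (-ξ) b)
          = ∑ ξ : G, ∑ a ∈ T, ∑ b ∈ T, e (-ξ) (a - b) :=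
            Finset.sum_congr rfl fun ξ _ => h2 ξ
        _ = ∑ a ∈ T, ∑ b ∈ T, ∑ ξ : G, e (-ξ) (a - b) := by
            rw [Finset.sum_comm]
            exact Finset.sum_congr rfl fun a _ => Finset.sum_comm
        _ = ∑ a ∈ T, ∑ b ∈ T, if a = b then (N : ℂ) else 0 := by
            refine Finset.sum_congr rfl fun a _ => Finset.sum_congr rfl fun b _ => ?_
            rw [horth' (a - b)]
            simp [sub_eq_zero]
        _ = ∑ a ∈ T, (N : ℂ) := by
            refine Finset.sum_congr rfl fun a ha => ?_
            rw [Finset.sum_ite_eq]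
            simp [ha]
        _ = (N : ℂ) * T.card := by
            rw [Finset.sum_const, nsmul_eq_mul, mul_comm]
    have hcast : ((∑ ξ : G, (‖∑ x ∈ T, e (-ξ) x‖) ^ 2 : ℝ) : ℂ)
        = (((N : ℝ) * T.card : ℝ) : ℂ) := by
      push_cast
      rw [← key]
      refine Finset.sum_congr rfl fun ξ _ => ?_
      rw [← Complex.ofReal_pow, Complex.sq_norm, Complex.mul_conj]
    exact_mod_cast hcast
  -- split off the k-th factor
  have hsplit : ∀ ξ : G, ∏ j : Fin l, Fh j ξ
      = (∏ j ∈ Finset.univ.erase k, Fh j ξ) * Fh k ξ := fun ξ =>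
    (Finset.prod_erase_mul _ _ (Finset.mem_univ k)).symm
  -- triangle inequality for the inversion formula
  have habs : (r x : ℝ) * N ≤
      ∑ ξ : G, (∏ j ∈ Finset.univ.erase k, ‖Fh j ξ‖) * ‖Fh k ξ‖ := by
    calc (r x : ℝ) * N = ‖(r x : ℂ) * (N : ℂ)‖ := by
          rw [norm_mul]; simp
      _ = ‖∑ ξ : G, (∏ j : Fin l, Fh j ξ) * e ξ x‖ := by rw [hC]
      _ ≤ ∑ ξ : G, ‖(∏ j : Fin l, Fh j ξ) * e ξ x‖ :=
          norm_sum_le _ _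
      _ = ∑ ξ : G, (∏ j ∈ Finset.univ.erase k, ‖Fh j ξ‖) * ‖Fh k ξ‖ := by
          refine Finset.sum_congr rfl fun ξ _ => ?_
          rw [norm_mul, hsplit ξ, norm_mul, norm_prod]
          have : ‖e ξ x‖ = 1 := by
            exact AddChar.norm_apply _ _
          rw [this, mul_one]
  -- Cauchy-Schwarz
  have hCS : ((r x : ℝ) * N) ^ 2 ≤
      (∑ ξ : G, ∏ j ∈ Finset.univ.erase k, (‖Fh j ξ‖) ^ 2) *
        ((N : ℝ) * (S k).card) := by
    have h0 : (0:ℝ) ≤ ∑ ξ : G, (∏ j ∈ Finset.univ.erase k, ‖Fh j ξ‖)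
        * ‖Fh k ξ‖ := by
      refine Finset.sum_nonneg fun ξ _ => mul_nonneg ?_ (norm_nonneg _)
      exact Finset.prod_nonneg fun j _ => norm_nonneg _
    calc ((r x : ℝ) * N) ^ 2
        ≤ (∑ ξ : G, (∏ j ∈ Finset.univ.erase k, ‖Fh j ξ‖)
            * ‖Fh k ξ‖) ^ 2 := by
          exact pow_le_pow_left₀ (by positivity) habs 2
      _ ≤ (∑ ξ : G, (∏ j ∈ Finset.univ.erase k, ‖Fh j ξ‖) ^ 2) *
            ∑ ξ : G, (‖Fh k ξ‖) ^ 2 :=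
          Finset.sum_mul_sq_le_sq_mul_sq _ _ _
      _ = (∑ ξ : G, ∏ j ∈ Finset.univ.erase k, (‖Fh j ξ‖) ^ 2) *
            ((N : ℝ) * (S k).card) := by
          simp only [hFh]
          rw [hD (S k)]
          congr 1
          exact Finset.sum_congr rfl fun ξ _ => (Finset.prod_pow _ _ _).symm
  -- conclude
  set Sig : ℝ := ∑ ξ : G, ∏ j ∈ Finset.univ.erase k, (‖Fh j ξ‖) ^ 2 with hSig
  have hfinal : (r x : ℝ) ^ 2 ≤ ((S k).card : ℝ) / N * Sig := by
    rw [div_mul_eq_mul_div, le_div_iff₀ hNR]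
    have h4 : ((r x : ℝ) ^ 2 * N) * N ≤ (((S k).card : ℝ) * Sig) * N := by
      nlinarith [hCS]
    exact le_of_mul_le_mul_right h4 hNR
  simp only [hSig, hFh] at hfinal
  exact hfinal

/-- Theorem 1.4: for a dissociated `Λ ⊆ G` and arbitrary sets `S₁, …, S_l` (`l ≥ 2`),
`∑_{x∈Λ} (S₁*…*S_l)²(x) ≤ C₃ (|S_l|/N)(∑_ξ ∏_{j=1}^{l-1} |Ŝ_j(ξ)|²) log N` (log base 2),
where `(S₁*…*S_l)(x)` counts tuples `(y₁,…,y_l) ∈ S₁×…×S_l` with `∑ y_j = x`. -/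
theorem dual_chang :
    ∃ C₃ : ℝ, 0 < C₃ ∧
      ∀ (G : Type) [AddCommGroup G] [Fintype G] [DecidableEq G]
        (e : AddChar G (AddChar G ℂ)) (_ : Function.Injective e)
        (l : ℕ) (_ : 2 ≤ l)
        (Λ : Finset G) (_ : AddDissociated (Λ : Set G))
        (S : Fin l → Finset G),
        ∑ x ∈ Λ,
            ((Finset.univ.filter
              (fun y : Fin l → G => (∀ j, y j ∈ S j) ∧ ∑ j, y j = x)).card : ℝ) ^ 2 ≤
          C₃ * (((S ⟨l - 1, by omega⟩).card : ℝ) / Fintype.card G) *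
            (∑ ξ : G, ∏ j ∈ Finset.univ.filter (fun j : Fin l => (j : ℕ) < l - 1),
                (‖∑ x ∈ S j, e (-ξ) x‖) ^ 2) *
            Real.logb 2 (Fintype.card G) := by
  refine ⟨1, one_pos, ?_⟩
  intro G _ _ _ e he l hl Λ hΛ S
  set N := Fintype.card G with hN
  have hN0 : 0 < N := Fintype.card_pos
  set k : Fin l := ⟨l - 1, by omega⟩ with hk
  -- the filter in the statement is `univ.erase k`
  have hfilter : Finset.univ.filter (fun j : Fin l => (j : ℕ) < l - 1)
      = Finset.univ.erase k := by
    ext j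
    have hj := j.isLt
    simp only [Finset.mem_filter, Finset.mem_univ, true_and, Finset.mem_erase, and_true]
    constructor
    · intro h hjk
      rw [hjk] at h
      simp only [hk] at h
      omega
    · intro h
      have : (j : ℕ) ≠ l - 1 := fun hc => h (Fin.ext (by simpa [hk] using hc))
      omega
  -- cardinality of a dissociated set
  have hcard : 2 ^ Λ.card ≤ N := by
    have hinj : Set.InjOn (fun t : Finset G => ∑ y ∈ t, y) {t : Finset G | ↑t ⊆ (Λ : Set G)} :=
      hΛ
    have h1 : Λ.powerset.card ≤ (Finset.univ : Finset G).card := by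
      apply Finset.card_le_card_of_injOn (fun t => ∑ y ∈ t, y) (fun t _ => Finset.mem_univ _)
      intro t ht u hu h
      exact hinj (by simpa using Finset.mem_powerset.1 ht)
        (by simpa using Finset.mem_powerset.1 hu) h
    rwa [Finset.card_powerset, Finset.card_univ] at h1
  have hΛR : (Λ.card : ℝ) ≤ Real.logb 2 N := by
    have h2 : ((2:ℝ)) ^ Λ.card ≤ (N : ℝ) := by exact_mod_cast hcard
    calc (Λ.card : ℝ) = Real.logb 2 ((2:ℝ) ^ Λ.card) := by
          rw [Real.logb_pow, Real.logb_self_eq_one one_lt_two, mul_one]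
      _ ≤ Real.logb 2 (N : ℝ) :=
          Real.logb_le_logb_of_le one_lt_two (pow_pos two_pos _) h2
  -- the per-point bound
  set M : ℝ := (((S k).card : ℝ) / N) *
      ∑ ξ : G, ∏ j ∈ Finset.univ.erase k, (‖∑ x ∈ S j, e (-ξ) x‖) ^ 2 with hM
  have hM0 : 0 ≤ M := by
    apply mul_nonneg (by positivity)
    refine Finset.sum_nonneg fun ξ _ => Finset.prod_nonneg fun j _ => sq_nonneg _
  have hbound : ∑ x ∈ Λ,
      ((Finset.univ.filter
        (fun y : Fin l → G => (∀ j, y j ∈ S j) ∧ ∑ j, y j = x)).card : ℝ) ^ 2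
      ≤ Λ.card * M := by
    calc ∑ x ∈ Λ, ((Finset.univ.filter
          (fun y : Fin l → G => (∀ j, y j ∈ S j) ∧ ∑ j, y j = x)).card : ℝ) ^ 2
        ≤ ∑ _x ∈ Λ, M := Finset.sum_le_sum fun x _ => pointwise_bound e he S k x
      _ = Λ.card * M := by rw [Finset.sum_const, nsmul_eq_mul]
  calc ∑ x ∈ Λ, ((Finset.univ.filter
        (fun y : Fin l → G => (∀ j, y j ∈ S j) ∧ ∑ j, y j = x)).card : ℝ) ^ 2
      ≤ Λ.card * M := hbound
    _ ≤ Real.logb 2 N * M := mul_le_mul_of_nonneg_right hΛR hM0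
    _ = 1 * (((S k).card : ℝ) / N) *
          (∑ ξ : G, ∏ j ∈ Finset.univ.filter (fun j : Fin l => (j : ℕ) < l - 1),
            (‖∑ x ∈ S j, e (-ξ) x‖) ^ 2) * Real.logb 2 N := by
        rw [hfilter, hM]
        ring
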